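/- For every n ≥ 2, there is a bijection between the set of bargraphs of semiperimeter n and the set of Motzkin paths with no peaks and no valleys whose total number of up steps plus horizontal steps equals n−1. -/
import Mathlib


/-- Steps of bargraphs / Motzkin paths. -/
inductive Step where
  | U : Step
  | H : Step
  | D : Step
deriving DecidableEq

/-- Vertical displacement of a step. -/
def Step.val : Step → ℤ
  | .U => 1
  | .H => 0
  | .D => -1

/-- Mirror of a step (swap U and D). -/
def Step.mirror : Step → Step
  | .U => .D
  | .H => .H
  | .D => .U

/-- Final height of a word. -/
def hgt (w : List Step) : ℤ := (w.map Step.val).sum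

/-- A Motzkin path prefix: never goes below the x-axis. -/
def IsMotzkinPrefix (w : List Step) : Prop := ∀ p : List Step, p <+: w → 0 ≤ hgt p

/-- A Motzkin path: never below the x-axis, ends at height 0. -/
def IsMotzkin (w : List Step) : Prop := IsMotzkinPrefix w ∧ hgt w = 0

/-- No peak `UD` and no valley `DU`. -/
def Cornerless (w : List Step) : Prop :=
  ¬ [Step.U, Step.D] <:+: w ∧ ¬ [Step.D, Step.U] <:+: w

/-- A bargraph: starts at the origin, ends on the x-axis, stays strictly above the
x-axis except at the endpoints, and has no factor `UD` or `DU`. -/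
def IsBargraph (w : List Step) : Prop :=
  2 ≤ w.length ∧ hgt w = 0 ∧
    (∀ p : List Step, p <+: w → p ≠ [] → p ≠ w → 0 < hgt p) ∧ Cornerless w

/-- Semiperimeter: number of `U` steps plus number of `H` steps. -/
def semi (w : List Step) : ℕ := w.count Step.U + w.count Step.H

/-- Length of the initial run of `U` steps. -/
def leadU : List Step → ℕ
  | Step.U :: rest => leadU rest + 1
  | _ => 0

/-- Length of the initial run of `H` steps. -/
def leadH : List Step → ℕ
  | Step.H :: rest => leadH rest + 1
  | _ => 0

/-- Length of the initial run of `D` steps. -/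
def leadD : List Step → ℕ
  | Step.D :: rest => leadD rest + 1
  | _ => 0

/-- Length of the first maximal run of `D` steps (0 if none). -/
def firstDescLen : List Step → ℕ
  | [] => 0
  | Step.D :: rest => leadD rest + 1
  | _ :: rest => firstDescLen rest

/-- Number of occurrences of the two-letter factor `a b`. -/
def cnt2 (a b : Step) : List Step → ℕ
  | x :: y :: rest => (if x = a ∧ y = b then 1 else 0) + cnt2 a b (y :: rest)
  | _ => 0

/-- Heights of the columns (`H` steps), starting from a given height. -/
def colHeights : ℤ → List Step → List ℤ
  | _, [] => []
  | h, Step.U :: rest => colHeights (h + 1) rest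
  | h, Step.H :: rest => h :: colHeights h rest
  | h, Step.D :: rest => colHeights (h - 1) rest

/-- Width of the leftmost maximal horizontal segment (0 if none). -/
def lhsW : List Step → ℕ
  | [] => 0
  | Step.H :: rest => leadH rest + 1
  | _ :: rest => lhsW rest

/-- Delete `h` steps at the start of the leftmost horizontal segment. -/
def stripLeadH (h : ℕ) : List Step → List Step
  | [] => []
  | Step.H :: rest => List.drop h (Step.H :: rest)
  | s :: rest => s :: stripLeadH h rest

/-- Number of initial columns of height 1: largest `j` such that the word begins `U H^j`. -/
def iuc : List Step → ℕ
  | Step.U :: rest => leadH rest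
  | _ => 0

/-- Number of maximal horizontal segments. -/
def hsCount : List Step → ℕ
  | [] => 0
  | [Step.H] => 1
  | [_] => 0
  | a :: b :: rest => (if a = Step.H ∧ b ≠ Step.H then 1 else 0) + hsCount (b :: rest)

/-- Mirror image: reverse the word and swap `U` with `D`. -/
def mir (w : List Step) : List Step := (w.reverse).map Step.mirror

/-- Shape of strictly alternating bargraphs:
`U^{i₁} H D^{k₁} H U^{i₂} H D^{k₂} H ⋯ U^{iₘ} H D^{kₘ}` with all `iᵣ, kᵣ ≥ 1`. -/
inductive SAShape : List Step → Prop where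
  | base (i k : ℕ) : 1 ≤ i → 1 ≤ k →
      SAShape (List.replicate i Step.U ++ [Step.H] ++ List.replicate k Step.D)
  | cons (i k : ℕ) (w : List Step) : 1 ≤ i → 1 ≤ k → SAShape w →
      SAShape (List.replicate i Step.U ++ [Step.H] ++ List.replicate k Step.D ++ [Step.H] ++ w)

/-- A strictly alternating bargraph. -/
def IsStrictAlt (w : List Step) : Prop := IsBargraph w ∧ SAShape w

/-- A secondary structure on `{0, …, m-1}`: all consecutive edges are present, every
vertex has at most one non-consecutive neighbour, and there are no crossing edges. -/
def IsSecondaryStructure {m : ℕ} (G : SimpleGraph (Fin m)) : Prop :=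
  (∀ i j : Fin m, (i : ℕ) + 1 = (j : ℕ) → G.Adj i j) ∧
  (∀ i j k : Fin m, G.Adj i j → G.Adj i k →
      (i : ℕ) + 1 ≠ (j : ℕ) → (j : ℕ) + 1 ≠ (i : ℕ) →
      (i : ℕ) + 1 ≠ (k : ℕ) → (k : ℕ) + 1 ≠ (i : ℕ) → j = k) ∧
  ¬ ∃ i j k l : Fin m, (i : ℕ) < (j : ℕ) ∧ (j : ℕ) < (k : ℕ) ∧ (k : ℕ) < (l : ℕ) ∧
      G.Adj i k ∧ G.Adj j l

/-- Generating function of bargraphs: `x` (variable 0) marks `H` steps,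
`y` (variable 1) marks `U` steps. -/
noncomputable def BG : MvPowerSeries (Fin 2) ℚ :=
  fun d => (Nat.card {w : List Step //
    IsBargraph w ∧ w.count Step.H = d 0 ∧ w.count Step.U = d 1} : ℚ)

/-- Generating function of cornerless Motzkin paths. -/
noncomputable def MG : MvPowerSeries (Fin 2) ℚ :=
  fun d => (Nat.card {w : List Step //
    IsMotzkin w ∧ Cornerless w ∧ w.count Step.H = d 0 ∧ w.count Step.U = d 1} : ℚ)

/-- Generating function of bargraphs avoiding the factor `DH`. -/
noncomputable def BDH : MvPowerSeries (Fin 2) ℚ :=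
  fun d => (Nat.card {w : List Step //
    IsBargraph w ∧ ¬ [Step.D, Step.H] <:+: w ∧
      w.count Step.H = d 0 ∧ w.count Step.U = d 1} : ℚ)

/-- Generating function of bargraphs avoiding the factors `DH` and `HH`. -/
noncomputable def BDHHH : MvPowerSeries (Fin 2) ℚ :=
  fun d => (Nat.card {w : List Step //
    IsBargraph w ∧ ¬ [Step.D, Step.H] <:+: w ∧ ¬ [Step.H, Step.H] <:+: w ∧
      w.count Step.H = d 0 ∧ w.count Step.U = d 1} : ℚ)

/-- Generating function of cornerless Motzkin path prefixes ending at height `h`. -/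
noncomputable def Pgf (h : ℕ) : MvPowerSeries (Fin 2) ℚ :=
  fun d => (Nat.card {w : List Step //
    IsMotzkinPrefix w ∧ Cornerless w ∧ hgt w = (h : ℤ) ∧
      w.count Step.H = d 0 ∧ w.count Step.U = d 1} : ℚ)

/-- Decomposition `G = U^a G₁ H G₂ D^a` of a strictly alternating bargraph. -/
def SADecomp (t : ℕ × List Step × List Step) (G : List Step) : Prop :=
  1 ≤ t.1 ∧ IsStrictAlt t.2.1 ∧ IsStrictAlt (Step.U :: (t.2.2 ++ [Step.D])) ∧
    G = List.replicate t.1 Step.U ++ t.2.1 ++ [Step.H] ++ t.2.2 ++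
      List.replicate t.1 Step.D

-- auxiliary lemmas
lemma hgt_nil : hgt ([] : List Step) = 0 := rfl
lemma hgt_cons (a : Step) (l : List Step) : hgt (a :: l) = a.val + hgt l := by simp [hgt]
lemma hgt_append (l l' : List Step) : hgt (l ++ l') = hgt l + hgt l' := by simp [hgt]

lemma prefix_concat_cases {q m : List Step} {a : Step} (h : q <+: m ++ [a]) :
    q <+: m ∨ q = m ++ [a] := by
  rcases Nat.lt_or_ge q.length (m ++ [a]).length with hl | hl
  · left
    have hq : q = (m ++ [a]).take q.length := (List.prefix_iff_eq_take.mp h)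
    simp at hl
    rw [hq, List.take_append_of_le_length (by omega)]
    exact List.take_prefix _ _
  · right
    exact h.eq_of_length (le_antisymm h.length_le hl)

lemma bargraph_decomp {w : List Step} (hw : IsBargraph w) :
    ∃ m, w = Step.U :: m ++ [Step.D] ∧ IsMotzkin m ∧ Cornerless m := by
  obtain ⟨hlen, hzero, hpos, hcl⟩ := hw
  obtain ⟨a, t, rfl⟩ : ∃ a t, w = a :: t := by
    cases w with
    | nil => simp at hlen
    | cons a t => exact ⟨a, t, rfl⟩
  have ht : t ≠ [] := by
    intro h; subst h; simp at hlen
  obtain ⟨m, b, rfl⟩ : ∃ m b, t = m ++ [b] := by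
    rcases t.eq_nil_or_concat with h | ⟨L, b, h⟩
    · exact absurd h ht
    · exact ⟨L, b, by simpa using h⟩
  have ha : a = Step.U := by
    have h1 : (0:ℤ) < hgt [a] := by
      refine hpos [a] ⟨m ++ [b], rfl⟩ (by simp) ?_
      intro h
      have := congrArg List.length h
      simp at this
    cases a <;> simp [hgt, Step.val] at h1 ⊢
  subst ha
  have hmid : (0:ℤ) < hgt (Step.U :: m) := by
    refine hpos (Step.U :: m) ⟨[b], by simp⟩ (by simp) ?_
    intro h
    have := congrArg List.length h
    simp at this
  rw [hgt_cons] at hmid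
  have hz := hzero
  rw [hgt_cons, hgt_append, hgt_cons, hgt_nil] at hz
  simp [Step.val] at hz hmid
  have hb : b = Step.D := by
    cases b <;> simp [Step.val] at hz ⊢ <;> omega
  subst hb
  have hm0 : hgt m = 0 := by simp [Step.val] at hz; omega
  refine ⟨m, rfl, ⟨?_, hm0⟩, ?_⟩
  · intro p hp
    have hlt : p.length ≤ m.length := hp.length_le
    have h1 : (0:ℤ) < hgt (Step.U :: p) := by
      refine hpos (Step.U :: p) ?_ (by simp) ?_
      · exact (List.cons_prefix_cons).mpr ⟨rfl, hp.trans ⟨[Step.D], rfl⟩⟩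
      · intro h
        have := congrArg List.length h
        simp at this; omega
    rw [hgt_cons] at h1
    simp [Step.val] at h1
    omega
  · constructor
    · intro hin
      exact hcl.1 (hin.trans ⟨[Step.U], [Step.D], by simp⟩)
    · intro hin
      exact hcl.2 (hin.trans ⟨[Step.U], [Step.D], by simp⟩)

lemma motzkin_to_bargraph {m : List Step} (hm : IsMotzkin m) (hc : Cornerless m)
    (hne : m ≠ []) : IsBargraph (Step.U :: m ++ [Step.D]) := by
  obtain ⟨hpre, h0⟩ := hm
  refine ⟨by simp, ?_, ?_, ?_, ?_⟩
  · have h0' : (List.map Step.val m).sum = 0 := h0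
    simp [hgt, Step.val, h0']
  · intro p hp hne' hnw
    cases p with
    | nil => exact absurd rfl hne'
    | cons a q =>
      obtain ⟨ha, hq⟩ := List.cons_prefix_cons.mp hp
      subst ha
      rcases prefix_concat_cases hq with hq' | rfl
      · rw [hgt_cons]
        have := hpre q hq'
        simp [Step.val]; omega
      · exact absurd rfl hnw
  -- no UD factor
  · rintro ⟨s, t, h⟩
    cases s with
    | nil =>
      simp only [List.nil_append, List.cons_append] at h
      injection h with _ h
      cases m with
      | nil => exact hne rfl
      | cons c m' =>
        rw [List.cons_append] at h
        injection h with hc' _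
        have := hpre [Step.D] ⟨m', by rw [hc']; rfl⟩
        simp [hgt, Step.val] at this
    | cons a s' =>
      simp only [List.cons_append] at h
      injection h with _ h
      rcases t.eq_nil_or_concat with rfl | ⟨t', x, ht⟩
      · simp only [List.append_nil] at h
        rw [show [Step.U, Step.D] = [Step.U] ++ [Step.D] from rfl,
          ← List.append_assoc] at h
        have hm' : s' ++ [Step.U] = m := (List.append_inj' h rfl).1
        have h1 := hpre s' (hm' ▸ ⟨[Step.U], rfl⟩)
        have h2 : hgt (s' ++ [Step.U]) = 0 := hm' ▸ h0
        rw [hgt_append, hgt_cons, hgt_nil] at h2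
        simp [Step.val] at h2
        omega
      · subst ht
        rw [List.concat_eq_append, ← List.append_assoc] at h
        have hm' : s' ++ [Step.U, Step.D] ++ t' = m := (List.append_inj' h rfl).1
        exact hc.1 (hm' ▸ ⟨s', t', rfl⟩)
  -- no DU factor
  · rintro ⟨s, t, h⟩
    cases s with
    | nil =>
      simp only [List.nil_append, List.cons_append] at h
      injection h with h1 _
      exact Step.noConfusion h1
    | cons a s' =>
      simp only [List.cons_append] at h
      injection h with _ h
      rcases t.eq_nil_or_concat with rfl | ⟨t', x, ht⟩
      · simp only [List.append_nil] at h
        rw [show [Step.D, Step.U] = [Step.D] ++ [Step.U] from rfl,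
          ← List.append_assoc] at h
        have := (List.append_inj' h rfl).2
        simp at this
      · subst ht
        rw [List.concat_eq_append, ← List.append_assoc] at h
        have hm' : s' ++ [Step.D, Step.U] ++ t' = m := (List.append_inj' h rfl).1
        exact hc.2 (hm' ▸ ⟨s', t', rfl⟩)

lemma semi_eq {m : List Step} : semi (Step.U :: m ++ [Step.D]) = semi m + 1 := by
  simp [semi, List.count_cons, List.count_append]
  omega

/-- for every `n ≥ 2` there is a bijection between bargraphs of
semiperimeter `n` and cornerless Motzkin paths with `#U + #H = n - 1`. -/
theorem bargraph_cornerlessMotzkin_bijection :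
    ∀ n : ℕ, 2 ≤ n →
      Nonempty ({w : List Step // IsBargraph w ∧ semi w = n} ≃
        {w : List Step // IsMotzkin w ∧ Cornerless w ∧
          w.count Step.U + w.count Step.H = n - 1}) := by
  intro n hn
  have memA : ∀ w : List Step, IsBargraph w ∧ semi w = n →
      IsMotzkin ((w.drop 1).dropLast) ∧ Cornerless ((w.drop 1).dropLast) ∧
        ((w.drop 1).dropLast).count Step.U + ((w.drop 1).dropLast).count Step.H = n - 1 := by
    intro w ⟨hb, hs⟩
    obtain ⟨m, rfl, hm, hc⟩ := bargraph_decomp hb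
    have he : ((Step.U :: m ++ [Step.D]).drop 1).dropLast = m := by simp
    rw [he]
    refine ⟨hm, hc, ?_⟩
    rw [semi_eq] at hs
    simp [semi] at hs
    omega
  have memB : ∀ m : List Step, IsMotzkin m ∧ Cornerless m ∧
      m.count Step.U + m.count Step.H = n - 1 →
      IsBargraph (Step.U :: m ++ [Step.D]) ∧ semi (Step.U :: m ++ [Step.D]) = n := by
    intro m ⟨hm, hc, hcount⟩
    have hne : m ≠ [] := by
      intro h; subst h; simp at hcount; omega
    refine ⟨motzkin_to_bargraph hm hc hne, ?_⟩
    rw [semi_eq]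
    simp [semi]
    omega
  refine ⟨{
    toFun := fun w => ⟨(w.1.drop 1).dropLast, memA w.1 w.2⟩
    invFun := fun m => ⟨Step.U :: m.1 ++ [Step.D], memB m.1 m.2⟩
    left_inv := ?_
    right_inv := ?_ }⟩
  · rintro ⟨w, hw⟩
    obtain ⟨m, rfl, -, -⟩ := bargraph_decomp hw.1
    simp
  · rintro ⟨m, hm⟩
    simp
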